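/- Fix λ ∈ (0,1) and define f₀(z) := min{e^{z+λ−1}, 1} and f₁ as: f₁(z) = (e^{λ−1}−λ)/(1−z) for z ∈ [0, λe^{1−λ}), f₁(z) = −λ/W(−λe^{1−λ−z}) for z ∈ [λe^{1−λ}, 1), f₁(1) = 1. Then f₀(z) ≥ f₁(z) for all z ∈ [0,1]. -/

import Mathlib

/-- `x * exp x` is monotone on `[-1, ∞)`. -/
lemma aux_mul_exp_mono {a b : ℝ} (ha : -1 ≤ a) (hab : a ≤ b) :
    a * Real.exp a ≤ b * Real.exp b := by
  have hd : ∀ x : ℝ, HasDerivAt (fun x : ℝ => x * Real.exp x) ((x + 1) * Real.exp x) x := by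
    intro x
    have h := (hasDerivAt_id x).fun_mul (Real.hasDerivAt_exp x)
    simp only [id_eq] at h
    refine h.congr_deriv ?_
    ring
  have hmono : MonotoneOn (fun x : ℝ => x * Real.exp x) (Set.Ici (-1)) := by
    apply monotoneOn_of_deriv_nonneg (convex_Ici _)
    · exact (continuous_id.mul Real.continuous_exp).continuousOn
    · intro x _
      exact (hd x).differentiableAt.differentiableWithinAt
    · intro x hx
      rw [(hd x).deriv]
      have hx' : -1 < x := by simpa using hx
      have : 0 ≤ x + 1 := by linarith
      positivity
  exact hmono ha (le_trans ha hab) hab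

theorem stmt_8 (W : ℝ → ℝ)
    (hW : ∀ z : ℝ, -(Real.exp 1)⁻¹ ≤ z → -1 ≤ W z ∧ W z * Real.exp (W z) = z)
    (hW' : ∀ y : ℝ, -1 ≤ y → W (y * Real.exp y) = y)
    (l : ℝ) (hl : l ∈ Set.Ioo (0 : ℝ) 1)
    (f₀ f₁ : ℝ → ℝ)
    (hf₀ : ∀ z, f₀ z = min (Real.exp (z + l - 1)) 1)
    (hf₁ : ∀ z, f₁ z =
      if z < l * Real.exp (1 - l) then (Real.exp (l - 1) - l) / (1 - z)
      else if z < 1 then -l / W (-(l * Real.exp (1 - l - z)))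
      else 1) :
    ∀ z ∈ Set.Icc (0 : ℝ) 1, f₀ z ≥ f₁ z := by
  obtain ⟨hl0, hl1⟩ := hl
  set t : ℝ := l * Real.exp (1 - l) with ht_def
  have ht0 : 0 < t := by positivity
  have hlt : l < Real.exp (l - 1) := by
    have := Real.add_one_lt_exp (x := l - 1) (by intro h; nlinarith)
    linarith
  have hinv1 : Real.exp (l - 1) * Real.exp (1 - l) = 1 := by
    rw [← Real.exp_add]; norm_num
  have hep : 0 < Real.exp (1 - l) := Real.exp_pos _
  have ht1 : t < 1 := by nlinarith
  have hone_le : (1 : ℝ) ≤ Real.exp (1 - l) := by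
    rw [Real.one_le_exp_iff]; linarith
  have hlet : l ≤ t := by nlinarith
  -- Step 1 : f₁ z ≤ exp (z - 1) on [0,1]
  have key : ∀ z, 0 ≤ z → z ≤ 1 → f₁ z ≤ Real.exp (z - 1) := by
    intro z hz0 hz1
    rw [hf₁]
    by_cases h1 : z < t
    · simp only [if_pos h1]
      have hz1' : z < 1 := lt_trans h1 ht1
      have hpos : 0 < 1 - z := by linarith
      rw [div_le_iff₀ hpos]
      -- exp(l-1) - l = exp(l-1) * (1 - t)
      have heq : Real.exp (l - 1) - l = Real.exp (l - 1) * (1 - t) := by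
        rw [ht_def]; linear_combination l * hinv1
      -- (1-t) * exp(t-1) ≤ (1-z) * exp(z-1)
      have hmono : (1 - t) * Real.exp (t - 1) ≤ (1 - z) * Real.exp (z - 1) := by
        have hE1 : Real.exp (t - z) * Real.exp (z - t) = 1 := by
          rw [← Real.exp_add]; norm_num
        have hE2 : 1 + (z - t) ≤ Real.exp (z - t) := by
          have := Real.add_one_le_exp (z - t); linarith
        have hE3 : (1 : ℝ) ≤ Real.exp (t - z) := by
          rw [Real.one_le_exp_iff]; linarith
        have hEp : 0 < Real.exp (t - z) := Real.exp_pos _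
        have hstep : (1 - t) * Real.exp (t - z) ≤ 1 - z := by
          nlinarith [mul_le_mul_of_nonneg_left hE2 hEp.le,
            mul_le_mul_of_nonneg_left hE3 hz0]
        have hsplit : Real.exp (t - 1) = Real.exp (t - z) * Real.exp (z - 1) := by
          rw [← Real.exp_add]; congr 1; ring
        rw [hsplit]
        have hEz : 0 < Real.exp (z - 1) := Real.exp_pos _
        nlinarith [mul_le_mul_of_nonneg_right hstep hEz.le]
      have hle : Real.exp (l - 1) ≤ Real.exp (t - 1) := Real.exp_le_exp.mpr (by linarith)
      nlinarith [Real.exp_pos (l - 1), Real.exp_pos (t - 1)]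
    · simp only [if_neg h1]
      by_cases h2 : z < 1
      · simp only [if_pos h2]
        push_neg at h1
        set a : ℝ := -(l * Real.exp (1 - l - z)) with ha_def
        have hte : t ≤ Real.exp (z - 1) := by
          have h1' : t ≤ Real.exp (t - 1) := by
            have := Real.add_one_le_exp (t - 1); linarith
          exact le_trans h1' (Real.exp_le_exp.mpr (by linarith))
        have hrw : l * Real.exp (1 - l - z) = t * Real.exp (-z) := by
          rw [ht_def, mul_assoc, ← Real.exp_add]
          congr 2 <;> ring
        have ha_low : -(Real.exp 1)⁻¹ ≤ a := by
          have hinv : (Real.exp 1)⁻¹ = Real.exp (-1) := by rw [← Real.exp_neg]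
          have hch : t * Real.exp (-z) ≤ Real.exp (-1) := by
            have h := mul_le_mul_of_nonneg_right hte (Real.exp_pos (-z)).le
            rw [← Real.exp_add] at h
            calc t * Real.exp (-z) ≤ Real.exp (z - 1 + -z) := h
              _ = Real.exp (-1) := by congr 1; ring
          rw [ha_def, hrw, hinv]; linarith
        obtain ⟨hy1, hy2⟩ := hW a ha_low
        set y : ℝ := W a with hy_def
        have ha_neg : a < 0 := by
          have : 0 < l * Real.exp (1 - l - z) := by positivity
          rw [ha_def]; linarith
        have hy_neg : y < 0 := by
          by_contra h
          push_neg at h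
          have : 0 ≤ y * Real.exp y := mul_nonneg h (Real.exp_pos _).le
          rw [hy2] at this; linarith
        rw [ha_def] at hy2
        have hyl : y ≤ -l := by
          by_contra h
          push_neg at h
          have hm : -l * Real.exp (-l) ≤ y * Real.exp y :=
            aux_mul_exp_mono (by linarith) h.le
          rw [hy2] at hm
          have : Real.exp (-l) < Real.exp (1 - l - z) :=
            Real.exp_lt_exp.mpr (by linarith)
          nlinarith
        have hprod : Real.exp (l + z - 1) * Real.exp (1 - l - z) = 1 := by
          have h0 : l + z - 1 + (1 - l - z) = 0 := by ring
          rw [← Real.exp_add, h0, Real.exp_zero]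
        have hsplit : Real.exp (y + l + z - 1) = Real.exp y * Real.exp (l + z - 1) := by
          rw [← Real.exp_add]; congr 1; ring
        have hdiv : -l / y = Real.exp (y + l + z - 1) := by
          rw [div_eq_iff (ne_of_lt hy_neg), hsplit]
          linear_combination (-(Real.exp (l + z - 1))) * hy2 + l * hprod
        rw [hdiv]
        exact Real.exp_le_exp.mpr (by linarith)
      · simp only [if_neg h2]
        push_neg at h2
        have hz : z = 1 := le_antisymm hz1 h2
        rw [hz]
        norm_num
  -- Step 2 : exp (z - 1) ≤ f₀ z
  intro z hz
  obtain ⟨hz0, hz1⟩ := hz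
  have h2 : Real.exp (z - 1) ≤ f₀ z := by
    rw [hf₀]
    apply le_min
    · exact Real.exp_le_exp.mpr (by linarith)
    · calc Real.exp (z - 1) ≤ Real.exp 0 := Real.exp_le_exp.mpr (by linarith)
        _ = 1 := Real.exp_zero
  exact le_trans (key z hz0 hz1) h2
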